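/- Assume the Setup. If there exist v,w ∈ X such that D(v) ∩ D(w) = ∅ and some edge of G joins a vertex of D(v) to a vertex of D(w), then G contains K_h as a topological subgraph. -/
import Mathlib


open SimpleGraph

/-- The interior (set of internal vertices) of a walk: its support minus the two endpoints. -/
def walkInterior {V : Type*} {G : SimpleGraph V} {x y : V} (p : G.Walk x y) : Set V :=
  {z | z ∈ p.support ∧ z ≠ x ∧ z ≠ y}

/-- `H` is (isomorphic to) a topological subgraph of `G`: there is an injective map
`φ : V(H) → V(G)` together with, for every edge `xy` of `H`, a path in `G` from `φ x`
to `φ y` of length at least 1, such that these paths are pairwise internally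
vertex-disjoint and no internal vertex of any of them lies in the image of `φ`. -/
def IsTopSubgraph {W : Type*} {V : Type*} (H : SimpleGraph W) (G : SimpleGraph V) : Prop :=
  ∃ φ : W → V, Function.Injective φ ∧
    ∃ P : ∀ x y : W, H.Adj x y → G.Walk (φ x) (φ y),
      (∀ x y (hxy : H.Adj x y), (P x y hxy).IsPath ∧ 0 < (P x y hxy).length) ∧
      (∀ x y (hxy : H.Adj x y), P y x hxy.symm = (P x y hxy).reverse) ∧
      (∀ x y (hxy : H.Adj x y), Disjoint (walkInterior (P x y hxy)) (Set.range φ)) ∧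
      (∀ x y (hxy : H.Adj x y), ∀ x' y' (hxy' : H.Adj x' y'), s(x, y) ≠ s(x', y') →
        Disjoint (walkInterior (P x y hxy)) (walkInterior (P x' y' hxy')))

/-- `G` contains the complete graph on `h` vertices as a topological subgraph. -/
def HasTopK {V : Type*} (G : SimpleGraph V) (h : ℕ) : Prop :=
  IsTopSubgraph (⊤ : SimpleGraph (Fin h)) G

/-- `a` is a constant witnessing the Bollobás–Thomason / Komlós–Szemerédi degree bound:
for every `h ≥ 1`, every finite simple graph excluding `K_h` as a topological subgraph
has degree sum at most `a·h²·n`. -/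
def DegSumConst (a : ℝ) : Prop :=
  ∀ (n h : ℕ) (G : SimpleGraph (Fin n)), 1 ≤ h → ¬ HasTopK G h →
    ∑ v : Fin n, (({u | G.Adj v u}.ncard : ℝ)) ≤ a * (h : ℝ) ^ 2 * (n : ℝ)

/-- One refinement round of Color Refinement on the complete graph on `V`, where the
current vertex partition is `r` and the arc color of `(v,w)` is the pair
`(G.Adj v w, χ v w)` (multiset equality is expressed by equality of all counts). -/
def crStep {V C : Type*} (G : SimpleGraph V) (χ : V → V → C) (r : V → V → Prop) :
    V → V → Prop := fun x y =>
  r x y ∧ ∀ (z : V) (c₁ c₂ : C),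
    ({u | u ≠ x ∧ r u z ∧ χ x u = c₁ ∧ χ u x = c₂ ∧ G.Adj x u}.ncard =
      {u | u ≠ y ∧ r u z ∧ χ y u = c₁ ∧ χ u y = c₂ ∧ G.Adj y u}.ncard) ∧
    ({u | u ≠ x ∧ r u z ∧ χ x u = c₁ ∧ χ u x = c₂ ∧ ¬ G.Adj x u}.ncard =
      {u | u ≠ y ∧ r u z ∧ χ y u = c₁ ∧ χ u y = c₂ ∧ ¬ G.Adj y u}.ncard)

/-- The Color Refinement stabilization of the partition `r` (iterating the refinement
round enough times to reach the stable partition). -/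
def crStable {V C : Type*} [Fintype V] (G : SimpleGraph V) (χ : V → V → C)
    (r : V → V → Prop) : V → V → Prop :=
  (crStep G χ)^[Fintype.card V + 1] r

/-- Split all color classes of size at most `t` into singletons. -/
def splitSmall {V : Type*} (t : ℕ) (r : V → V → Prop) : V → V → Prop := fun x y =>
  r x y ∧ ({u | r u x}.ncard ≤ t → x = y)

/-- The `t`-CR-stable partition obtained from the initial partition `r`: alternately
apply Color Refinement and split the classes of size at most `t`, until stable. -/
def tCRStable {V C : Type*} [Fintype V] (G : SimpleGraph V) (χ : V → V → C) (t : ℕ)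
    (r : V → V → Prop) : V → V → Prop :=
  (fun s => splitSmall t (crStable G χ s))^[Fintype.card V + 1] r

/-- The partition obtained from the vertex coloring `v ↦ χ v v` by individualizing
every vertex of `X`. -/
def indivRel {V C : Type*} (χ : V → V → C) (X : Set V) : V → V → Prop := fun x y =>
  χ x x = χ y y ∧ (x ∈ X ↔ y ∈ X) ∧ (x ∈ X → x = y)

/-- The `t`-closure `cl_t^{(G,χ)}(X)`: the set of vertices whose color class in the
`t`-CR-stable coloring (after individualizing `X`) is a singleton. -/
def clSet {V C : Type*} [Fintype V] (G : SimpleGraph V) (χ : V → V → C) (t : ℕ)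
    (X : Set V) : Set V :=
  {v | {u | tCRStable G χ t (indivRel χ X) u v}.ncard = 1}

/-- The arc relation of the `t`-closure graph of `(G,χ)`. -/
def clArc {V C : Type*} [Fintype V] (G : SimpleGraph V) (χ : V → V → C) (t : ℕ) :
    V → V → Prop := fun v w => v ≠ w ∧ w ∈ clSet G χ t {v}

/-- A vertex is maximal if it lies in a strongly connected component of the
`t`-closure graph without outgoing arcs. -/
def MaximalVtx {V C : Type*} [Fintype V] (G : SimpleGraph V) (χ : V → V → C) (t : ℕ)
    (v : V) : Prop :=
  ∀ u, clArc G χ t v u → clArc G χ t u v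

/-- A vertex coloring is `1`-stable. -/
def IsOneStable {V C : Type*} (G : SimpleGraph V) (lam : V → C) : Prop :=
  ∀ v w, lam v = lam w → ∀ c,
    {u | G.Adj v u ∧ lam u = c}.ncard = {u | G.Adj w u ∧ lam u = c}.ncard

/-- A pair coloring is `2`-stable on the simple graph `G`. -/
def IsTwoStable {V C : Type*} (G : SimpleGraph V) (χ : V → V → C) : Prop :=
  ∀ v w v' w', χ v w = χ v' w' →
    ((v = w ↔ v' = w') ∧ (G.Adj v w ↔ G.Adj v' w') ∧ χ v v = χ v' v' ∧ χ w w = χ w' w') ∧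
    ∀ c₁ c₂, {u | χ v u = c₁ ∧ χ u w = c₂}.ncard = {u | χ v' u = c₁ ∧ χ u w' = c₂}.ncard

/-- A pair coloring is `2`-stable on the directed graph with arc relation `E`. -/
def IsTwoStableDigraph {V C : Type*} (E : V → V → Prop) (χ : V → V → C) : Prop :=
  ∀ v w v' w', χ v w = χ v' w' →
    ((v = w ↔ v' = w') ∧ (E v w ↔ E v' w') ∧ (E w v ↔ E w' v') ∧
      χ v v = χ v' v' ∧ χ w w = χ w' w') ∧
    ∀ c₁ c₂, {u | χ v u = c₁ ∧ χ u w = c₂}.ncard = {u | χ v' u = c₁ ∧ χ u w' = c₂}.ncard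

/-- A coloring of triples is `3`-stable on the simple graph `G`. -/
def IsThreeStable {V C : Type*} (G : SimpleGraph V) (χ₃ : V → V → V → C) : Prop :=
  ∀ v₁ v₂ v₃ w₁ w₂ w₃, χ₃ v₁ v₂ v₃ = χ₃ w₁ w₂ w₃ →
    ((v₁ = v₂ ↔ w₁ = w₂) ∧ (v₁ = v₃ ↔ w₁ = w₃) ∧ (v₂ = v₃ ↔ w₂ = w₃) ∧
      (G.Adj v₁ v₂ ↔ G.Adj w₁ w₂) ∧ (G.Adj v₁ v₃ ↔ G.Adj w₁ w₃) ∧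
      (G.Adj v₂ v₃ ↔ G.Adj w₂ w₃)) ∧
    ∀ c₁ c₂ c₃,
      {u | χ₃ u v₂ v₃ = c₁ ∧ χ₃ v₁ u v₃ = c₂ ∧ χ₃ v₁ v₂ u = c₃}.ncard =
        {u | χ₃ u w₂ w₃ = c₁ ∧ χ₃ w₁ u w₃ = c₂ ∧ χ₃ w₁ w₂ u = c₃}.ncard

/-- Reachability in `G` by a walk avoiding the set `S`. -/
def ReachOutside {V : Type*} (G : SimpleGraph V) (S : Set V) (x y : V) : Prop :=
  ∃ p : G.Walk x y, ∀ z ∈ p.support, z ∉ S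

/-- `Z` is the vertex set of a connected component of the induced subgraph `G − S`. -/
def IsCompOutside {V : Type*} (G : SimpleGraph V) (S Z : Set V) : Prop :=
  ∃ x₀, x₀ ∉ S ∧ Z = {y | ReachOutside G S x₀ y}

/-- The neighborhood `N_G(S)` of a set `S`: all vertices outside `S` with a neighbor in `S`. -/
def nbhdOf {V : Type*} (G : SimpleGraph V) (S : Set V) : Set V :=
  {v | v ∉ S ∧ ∃ u ∈ S, G.Adj v u}

/-- A partition of the vertex set (given as an equivalence relation `r`) is
`λ`-definable: for some set `Cs` of colors attained on off-diagonal pairs, the classes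
of `r` are exactly the connected components of the graph with edges
`{v,w}` (`v ≠ w`) such that `λ(v,w) ∈ Cs`. -/
def LamDefinable {V C : Type*} (lam : V → V → C) (r : V → V → Prop) : Prop :=
  ∃ Cs : Set C, (∀ c ∈ Cs, ∃ v w : V, v ≠ w ∧ lam v w = c) ∧
    ∀ x y, r x y ↔ (SimpleGraph.fromRel (fun v w => lam v w ∈ Cs)).Reachable x y

section RelInfra

variable {V C : Type*} [Fintype V] {G : SimpleGraph V} {χ : V → V → C}

lemma crStep_le {r : V → V → Prop} {x y : V} (h : crStep G χ r x y) : r x y := h.1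

lemma splitSmall_le {t : ℕ} {r : V → V → Prop} {x y : V} (h : splitSmall t r x y) : r x y := h.1

lemma crStep_iter_le {r : V → V → Prop} (m : ℕ) {x y : V}
    (h : (crStep G χ)^[m] r x y) : r x y := by
  induction m generalizing x y with
  | zero => exact h
  | succ m ih =>
    rw [Function.iterate_succ_apply'] at h
    exact ih h.1

lemma crStable_le {r : V → V → Prop} {x y : V} (h : crStable G χ r x y) : r x y :=
  crStep_iter_le _ h

lemma classRel_eq {r : V → V → Prop} (hr : Equivalence r) {x y : V} (h : r x y) :
    {u | r u x} = {u | r u y} :=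
  Set.ext fun u => ⟨fun hu => hr.trans hu h, fun hu => hr.trans hu (hr.symm h)⟩

lemma crStep_equiv {r : V → V → Prop} (hr : Equivalence r) : Equivalence (crStep G χ r) := by
  constructor
  · exact fun x => ⟨hr.refl x, fun z c₁ c₂ => ⟨rfl, rfl⟩⟩
  · exact fun {x y} h => ⟨hr.symm h.1, fun z c₁ c₂ =>
      ⟨(h.2 z c₁ c₂).1.symm, (h.2 z c₁ c₂).2.symm⟩⟩
  · exact fun {x y z} h h' => ⟨hr.trans h.1 h'.1, fun w c₁ c₂ =>
      ⟨(h.2 w c₁ c₂).1.trans (h'.2 w c₁ c₂).1, (h.2 w c₁ c₂).2.trans (h'.2 w c₁ c₂).2⟩⟩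

lemma crStep_iter_equiv {r : V → V → Prop} (hr : Equivalence r) (m : ℕ) :
    Equivalence ((crStep G χ)^[m] r) := by
  induction m with
  | zero => exact hr
  | succ m ih => rw [Function.iterate_succ_apply']; exact crStep_equiv ih

lemma splitSmall_equiv {t : ℕ} {r : V → V → Prop} (hr : Equivalence r) :
    Equivalence (splitSmall t r) := by
  constructor
  · exact fun x => ⟨hr.refl x, fun _ => rfl⟩
  · intro x y h
    refine ⟨hr.symm h.1, fun hle => ?_⟩
    rw [classRel_eq hr (hr.symm h.1)] at hle
    exact (h.2 hle).symm
  · intro x y z h h'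
    refine ⟨hr.trans h.1 h'.1, fun hle => ?_⟩
    have hxy := h.2 hle
    rw [classRel_eq hr h.1] at hle
    exact hxy.trans (h'.2 hle)

lemma indivRel_equiv (χ : V → V → C) (X : Set V) : Equivalence (indivRel χ X) := by
  constructor
  · exact fun x => ⟨rfl, Iff.rfl, fun _ => rfl⟩
  · rintro x y ⟨h1, h2, h3⟩
    exact ⟨h1.symm, h2.symm, fun hy => ((h3 (h2.2 hy)).symm : y = x)⟩
  · rintro x y z ⟨h1, h2, h3⟩ ⟨h1', h2', h3'⟩
    exact ⟨h1.trans h1', h2.trans h2', fun hx => (h3 hx).trans (h3' (h2.1 hx))⟩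

end RelInfra
section FixedPoint

open Classical in
noncomputable def classesOf {V : Type*} [Fintype V] (r : V → V → Prop) : Finset (Finset V) :=
  Finset.univ.image (fun x => Finset.univ.filter (fun u => r u x))

variable {V : Type*} [Fintype V]

lemma classesOf_card_le (r : V → V → Prop) : (classesOf r).card ≤ Fintype.card V := by
  classical
  exact (Finset.card_image_le).trans (by simp)

lemma classesOf_card_pos [Nonempty V] (r : V → V → Prop) : 1 ≤ (classesOf r).card := by
  classical
  rw [Nat.one_le_iff_ne_zero, ← Nat.pos_iff_ne_zero, Finset.card_pos]
  exact (Finset.univ_nonempty).image _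

lemma classes_lt {s s' : V → V → Prop} (hs : Equivalence s) (hs' : Equivalence s')
    (hle : ∀ x y, s' x y → s x y) {x₀ y₀ : V} (hxy : s x₀ y₀) (hnxy : ¬ s' x₀ y₀) :
    (classesOf s).card < (classesOf s').card := by
  classical
  set φ : V → Finset V := fun x => Finset.univ.filter (fun u => s' u x) with hφdef
  set ψ : V → Finset V := fun x => Finset.univ.filter (fun u => s u x) with hψdef
  have hφ_iff : ∀ x y, φ x = φ y ↔ s' x y := by
    intro x y
    constructor
    · intro h
      have : y ∈ φ y := by simp [hφdef, hs'.refl]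
      rw [← h] at this
      have := (Finset.mem_filter.1 this).2
      exact hs'.symm this
    · intro h
      simp only [hφdef]
      ext u
      simp only [Finset.mem_filter, Finset.mem_univ, true_and]
      exact ⟨fun hu => hs'.trans hu h, fun hu => hs'.trans hu (hs'.symm h)⟩
  have hψ_of : ∀ x y, s x y → ψ x = ψ y := by
    intro x y h
    simp only [hψdef]
    ext u
    simp only [Finset.mem_filter, Finset.mem_univ, true_and]
    exact ⟨fun hu => hs.trans hu h, fun hu => hs.trans hu (hs.symm h)⟩
  set m : Finset V → Finset V :=
    fun Cc => if h : ∃ z, φ z = Cc then ψ (Classical.choose h) else ∅ with hmdef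
  have hmφ : ∀ x, m (φ x) = ψ x := by
    intro x
    have hex : ∃ z, φ z = φ x := ⟨x, rfl⟩
    simp only [hmdef, dif_pos hex]
    exact hψ_of _ _ (hle _ _ ((hφ_iff _ _).1 (Classical.choose_spec hex)))
  have himg : (classesOf s').image m = classesOf s := by
    have h1 : classesOf s' = Finset.univ.image φ := by
      simp only [classesOf, hφdef]
    have h2 : classesOf s = Finset.univ.image ψ := by
      simp only [classesOf, hψdef]
    rw [h1, h2, Finset.image_image]
    apply Finset.image_congr
    intro x _
    exact hmφ x
  have hninj : ¬ Set.InjOn m (classesOf s') := by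
    intro hinj
    have h1 : (φ x₀ : Finset V) ∈ classesOf s' := by
      simp only [classesOf, hφdef]
      exact Finset.mem_image_of_mem _ (Finset.mem_univ _)
    have h2 : (φ y₀ : Finset V) ∈ classesOf s' := by
      simp only [classesOf, hφdef]
      exact Finset.mem_image_of_mem _ (Finset.mem_univ _)
    have h3 : m (φ x₀) = m (φ y₀) := by
      rw [hmφ, hmφ]; exact hψ_of _ _ hxy
    exact hnxy ((hφ_iff _ _).1 (hinj h1 h2 h3))
  have hle' : (classesOf s).card ≤ (classesOf s').card := by
    rw [← himg]; exact Finset.card_image_le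
  rcases lt_or_eq_of_le hle' with h | h
  · exact h
  · exfalso
    apply hninj
    apply Finset.injOn_of_card_image_eq
    rw [himg, h]

/-- Abstract fixed-point lemma: a refining, equivalence-preserving operator iterated
`card V + 1` times starting from an equivalence relation reaches a fixed point. -/
lemma iterate_fixed [Nonempty V] (F : (V → V → Prop) → (V → V → Prop))
    (hFle : ∀ s x y, F s x y → s x y)
    (hFeq : ∀ s, Equivalence s → Equivalence (F s))
    (r₀ : V → V → Prop) (hr₀ : Equivalence r₀) :
    F (F^[Fintype.card V + 1] r₀) = F^[Fintype.card V + 1] r₀ := by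
  classical
  set n := Fintype.card V with hn
  have hEq : ∀ k, Equivalence (F^[k] r₀) := by
    intro k
    induction k with
    | zero => exact hr₀
    | succ k ih => rw [Function.iterate_succ_apply']; exact hFeq _ ih
  by_cases hstall : ∃ j, j ≤ n ∧ F^[j+1] r₀ = F^[j] r₀
  · obtain ⟨j, hj, hfix⟩ := hstall
    have hconst : ∀ i, F^[j + i] r₀ = F^[j] r₀ := by
      intro i
      induction i with
      | zero => rfl
      | succ i ih =>
        have : j + (i + 1) = (j + i) + 1 := by omega
        rw [this, Function.iterate_succ_apply', ih, ← Function.iterate_succ_apply' F j r₀, hfix]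
    have h1 : F^[n+1] r₀ = F^[j] r₀ := by
      have := hconst (n + 1 - j)
      rwa [show j + (n + 1 - j) = n + 1 by omega] at this
    rw [h1, ← Function.iterate_succ_apply' F j r₀, hfix]
  · push_neg at hstall
    exfalso
    have hgrow : ∀ k, k ≤ n + 1 → k + 1 ≤ (classesOf (F^[k] r₀)).card := by
      intro k
      induction k with
      | zero => intro _; exact classesOf_card_pos _
      | succ k ih =>
        intro hk
        have hkn : k ≤ n := by omega
        have hne := hstall k hkn
        have hstep : ∀ x y, F^[k+1] r₀ x y → F^[k] r₀ x y := by
          intro x y hxy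
          rw [Function.iterate_succ_apply'] at hxy
          exact hFle _ _ _ hxy
        have hwit : ∃ x y, F^[k] r₀ x y ∧ ¬ F^[k+1] r₀ x y := by
          by_contra hcon
          push_neg at hcon
          exact hne (funext fun x => funext fun y =>
            propext ⟨hstep x y, hcon x y⟩)
        obtain ⟨x₀, y₀, hxy, hnxy⟩ := hwit
        have hlt := classes_lt (hEq k) (hEq (k+1)) hstep hxy hnxy
        have := ih (by omega)
        omega
    have h1 := hgrow (n + 1) (le_refl _)
    have h2 := classesOf_card_le (F^[n+1] r₀)
    omega

end FixedPoint
section TCR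

variable {V C : Type*} [Fintype V] {G : SimpleGraph V} {χ : V → V → C} {t : ℕ} {Xs : Set V}

/-- Structural properties of the `t`-CR-stable partition. -/
lemma tCR_props [Nonempty V] (G : SimpleGraph V) (χ : V → V → C) (t : ℕ) (Xs : Set V) :
    Equivalence (tCRStable G χ t (indivRel χ Xs)) ∧
    (∀ x y, tCRStable G χ t (indivRel χ Xs) x y → indivRel χ Xs x y) ∧
    (tCRStable G χ t (indivRel χ Xs) = crStep G χ (tCRStable G χ t (indivRel χ Xs))) ∧
    (∀ x y, tCRStable G χ t (indivRel χ Xs) x y →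
      {u | tCRStable G χ t (indivRel χ Xs) u x}.ncard ≤ t → x = y) := by
  classical
  set F : (V → V → Prop) → (V → V → Prop) := fun s => splitSmall t (crStable G χ s) with hF
  have hFle : ∀ s x y, F s x y → s x y := fun s x y hxy => crStable_le (splitSmall_le hxy)
  have hFeq : ∀ s, Equivalence s → Equivalence (F s) := by
    intro s hs
    exact splitSmall_equiv (crStep_iter_equiv hs _)
  have hr₀ := indivRel_equiv χ Xs
  have hRdef : tCRStable G χ t (indivRel χ Xs) = F^[Fintype.card V + 1] (indivRel χ Xs) := rfl
  set R := tCRStable G χ t (indivRel χ Xs) with hR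
  have hfix : F R = R := by rw [hRdef]; exact iterate_fixed F hFle hFeq _ hr₀
  have hReq : Equivalence R := by
    rw [hRdef]
    clear_value R
    subst hRdef
    generalize Fintype.card V + 1 = k
    induction k with
    | zero => exact hr₀
    | succ k ih => rw [Function.iterate_succ_apply']; exact hFeq _ ih
  have hRle : ∀ x y, R x y → indivRel χ Xs x y := by
    rw [hRdef]
    clear_value R
    subst hRdef
    generalize Fintype.card V + 1 = k
    induction k with
    | zero => exact fun x y hxy => hxy
    | succ k ih =>
      intro x y hxy
      rw [Function.iterate_succ_apply'] at hxy
      exact ih x y (hFle _ _ _ hxy)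
  have hcrStable : crStable G χ R = R := by
    funext x y
    apply propext
    constructor
    · exact fun hxy => crStable_le hxy
    · intro hxy
      rw [← hfix] at hxy
      exact splitSmall_le hxy
  have hsplit : ∀ x y, R x y → {u | R u x}.ncard ≤ t → x = y := by
    intro x y hxy hle
    have h1 : F R x y := by rw [hfix]; exact hxy
    have h2 : splitSmall t (crStable G χ R) x y := h1
    rw [hcrStable] at h2
    exact h2.2 hle
  have hcrStep : R = crStep G χ R := by
    have h1 : crStep G χ ((crStep G χ)^[Fintype.card V] R) = R := by
      rw [← Function.iterate_succ_apply' (crStep G χ) (Fintype.card V) R]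
      exact hcrStable
    have h2 : (crStep G χ)^[Fintype.card V] R = R := by
      funext x y
      apply propext
      constructor
      · exact fun hxy => crStep_iter_le _ hxy
      · intro hxy
        rw [← h1] at hxy
        have := hxy.1
        exact this
    rw [h2] at h1
    exact h1.symm
  exact ⟨hReq, hRle, hcrStep, hsplit⟩

lemma clSet_class {x : V} (hx : x ∈ clSet G χ t Xs)
    (hrefl : Equivalence (tCRStable G χ t (indivRel χ Xs))) :
    {u | tCRStable G χ t (indivRel χ Xs) u x} = {x} := by
  obtain ⟨b, hb⟩ := Set.ncard_eq_one.1 hx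
  have hxmem : x ∈ {u | tCRStable G χ t (indivRel χ Xs) u x} := hrefl.refl x
  rw [hb] at hxmem ⊢
  rw [Set.mem_singleton_iff] at hxmem
  rw [hxmem]

/-- Key combinatorial lemma: if `x` is in the closure, `y` is not, and `xy ∈ E(G)`,
then `x` has at least `t+1` neighbors with diagonal color `χ y y`. -/
lemma bigAdj [Nonempty V] {x y : V} (hx : x ∈ clSet G χ t Xs) (hy : y ∉ clSet G χ t Xs)
    (hxy : G.Adj x y) :
    t + 1 ≤ {z | G.Adj x z ∧ χ z z = χ y y}.ncard := by
  classical
  obtain ⟨hReq, hRle, hcrStep, hsplit⟩ := tCR_props (Xs := Xs) G χ t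
  set R := tCRStable G χ t (indivRel χ Xs) with hR
  have hclx : {u | R u x} = {x} := clSet_class hx hReq
  have hymem : y ∈ {u | R u y} := hReq.refl y
  have hY2 : ∃ y'' ∈ {u | R u y}, y'' ≠ y := by
    by_contra hcon
    push_neg at hcon
    apply hy
    have heq : {u | R u y} = {y} :=
      Set.eq_singleton_iff_unique_mem.2 ⟨hymem, fun u hu => hcon u hu⟩
    show {u | R u y}.ncard = 1
    rw [heq, Set.ncard_singleton]
  obtain ⟨y'', hy''Y, hy''ne⟩ := hY2
  have hYbig : t + 1 ≤ {u | R u y}.ncard := by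
    by_contra hcon
    push_neg at hcon
    have hle : {u | R u y''}.ncard ≤ t := by
      rw [classRel_eq hReq (hy''Y : R y'' y)]
      omega
    exact hy''ne (hsplit y'' y hy''Y hle)
  have hsub : {u | R u y} ⊆ {z | G.Adj x z ∧ χ z z = χ y y} := by
    intro y' hy'
    have hRy' : R y' y := hy'
    have hdiag : χ y' y' = χ y y := (hRle _ _ hRy').1
    have hstep : crStep G χ R y' y := by rw [← hcrStep]; exact hRy'
    have hcount := (hstep.2 x (χ y x) (χ x y)).1
    have hRHS : {u | u ≠ y ∧ R u x ∧ χ y u = χ y x ∧ χ u y = χ x y ∧ G.Adj y u} = {x} := by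
      ext u
      simp only [Set.mem_setOf_eq, Set.mem_singleton_iff]
      constructor
      · rintro ⟨_, hux, _, _, _⟩
        have h2 : u ∈ ({x} : Set V) := by rw [← hclx]; exact hux
        exact h2
      · intro hu
        subst hu
        exact ⟨hxy.ne, hReq.refl _, rfl, rfl, hxy.symm⟩
    rw [hRHS, Set.ncard_singleton] at hcount
    have hLHS : {u | u ≠ y' ∧ R u x ∧ χ y' u = χ y x ∧ χ u y' = χ x y ∧ G.Adj y' u}.Nonempty := by
      rw [← Set.ncard_pos (Set.toFinite _)]
      omega
    obtain ⟨u, hu1, hu2, hu3, hu4, hu5⟩ := hLHS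
    have hux : u = x := by
      have h2 : u ∈ ({x} : Set V) := by rw [← hclx]; exact hu2
      exact h2
    rw [hux] at hu5
    exact ⟨hu5.symm, hdiag⟩
  calc t + 1 ≤ {u | R u y}.ncard := hYbig
    _ ≤ _ := Set.ncard_le_ncard hsub (Set.toFinite _)

end TCR
section Fiber

variable {V C : Type*} [Fintype V] {G : SimpleGraph V} {χ : V → V → C}

lemma ncard_filter_eq (p : V → Prop) [DecidablePred p] :
    {z | p z}.ncard = (Finset.univ.filter p).card := by
  classical
  rw [Set.ncard_eq_toFinset_card']
  congr 1
  ext z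
  simp

lemma fiber_count_aux (h2G : IsTwoStable G χ) {u u' : V} (huu : χ u u = χ u' u') (c₁ : C) :
    {z | χ u z = c₁}.ncard = {z | χ u' z = c₁}.ncard := by
  classical
  have key := fun c₂ => ((h2G u u u' u' huu).2 c₁ c₂)
  set T : Finset C := Finset.univ.image (fun z => χ z u) ∪ Finset.univ.image (fun z => χ z u')
    with hT
  have h1 : (Finset.univ.filter (fun z => χ u z = c₁)).card =
      ∑ c₂ ∈ T, ((Finset.univ.filter (fun z => χ u z = c₁)).filter
        (fun z => χ z u = c₂)).card := by
    apply Finset.card_eq_sum_card_fiberwise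
    intro z _
    exact Finset.mem_union_left _ (Finset.mem_image_of_mem _ (Finset.mem_univ z))
  have h2 : (Finset.univ.filter (fun z => χ u' z = c₁)).card =
      ∑ c₂ ∈ T, ((Finset.univ.filter (fun z => χ u' z = c₁)).filter
        (fun z => χ z u' = c₂)).card := by
    apply Finset.card_eq_sum_card_fiberwise
    intro z _
    exact Finset.mem_union_right _ (Finset.mem_image_of_mem _ (Finset.mem_univ z))
  rw [ncard_filter_eq, ncard_filter_eq, h1, h2]
  apply Finset.sum_congr rfl
  intro c₂ _
  have hkey := key c₂
  rw [ncard_filter_eq (fun z => χ u z = c₁ ∧ χ z u = c₂),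
    ncard_filter_eq (fun z => χ u' z = c₁ ∧ χ z u' = c₂)] at hkey
  rw [Finset.filter_filter, Finset.filter_filter]
  exact hkey

lemma fiber_nbr_count (h2G : IsTwoStable G χ) {u u' : V} (huu : χ u u = χ u' u') (cs : C) :
    {z | G.Adj u z ∧ χ z z = cs}.ncard = {z | G.Adj u' z ∧ χ z z = cs}.ncard := by
  classical
  set Q : C → Prop := fun c => ∀ p q, χ p q = c → (G.Adj p q ∧ χ q q = cs) with hQdef
  have hQ : ∀ (w z : V), (G.Adj w z ∧ χ z z = cs) ↔ Q (χ w z) := by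
    intro w z
    constructor
    · rintro ⟨hadj, hdiag⟩ p q hpq
      have h := h2G p q w z hpq
      exact ⟨(h.1.2.1).2 hadj, (h.1.2.2.2).trans hdiag⟩
    · intro hq
      exact hq w z rfl
  have hset : ∀ w : V, {z | G.Adj w z ∧ χ z z = cs} = {z | Q (χ w z)} := by
    intro w
    ext z
    exact hQ w z
  rw [hset u, hset u']
  set T : Finset C := Finset.univ.image (fun z => χ u z) ∪ Finset.univ.image (fun z => χ u' z)
    with hT
  have h1 : (Finset.univ.filter (fun z => Q (χ u z))).card =
      ∑ c₁ ∈ T, ((Finset.univ.filter (fun z => Q (χ u z))).filter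
        (fun z => χ u z = c₁)).card := by
    apply Finset.card_eq_sum_card_fiberwise
    intro z _
    exact Finset.mem_union_left _ (Finset.mem_image_of_mem _ (Finset.mem_univ z))
  have h2 : (Finset.univ.filter (fun z => Q (χ u' z))).card =
      ∑ c₁ ∈ T, ((Finset.univ.filter (fun z => Q (χ u' z))).filter
        (fun z => χ u' z = c₁)).card := by
    apply Finset.card_eq_sum_card_fiberwise
    intro z _
    exact Finset.mem_union_right _ (Finset.mem_image_of_mem _ (Finset.mem_univ z))
  rw [ncard_filter_eq (fun z => Q (χ u z)), ncard_filter_eq (fun z => Q (χ u' z)), h1, h2]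
  apply Finset.sum_congr rfl
  intro c₁ _
  have hcase : ∀ w : V, ((Finset.univ.filter (fun z => Q (χ w z))).filter
      (fun z => χ w z = c₁)) = if Q c₁ then Finset.univ.filter (fun z => χ w z = c₁) else ∅ := by
    intro w
    by_cases hq : Q c₁
    · rw [if_pos hq]
      ext z
      simp only [Finset.filter_filter, Finset.mem_filter, Finset.mem_univ, true_and]
      exact ⟨fun h => h.2, fun h => ⟨h ▸ hq, h⟩⟩
    · rw [if_neg hq]
      ext z
      simp only [Finset.filter_filter, Finset.mem_filter, Finset.mem_univ, true_and,
        Finset.notMem_empty, iff_false, not_and]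
      intro hz hc
      exact hq (hc ▸ hz)
  rw [hcase u, hcase u']
  by_cases hq : Q c₁
  · rw [if_pos hq, if_pos hq]
    have := fiber_count_aux h2G huu c₁
    rwa [ncard_filter_eq (fun z => χ u z = c₁), ncard_filter_eq (fun z => χ u' z = c₁)] at this
  · rw [if_neg hq, if_neg hq]

end Fiber
section Transport

lemma walkInterior_map {W V : Type*} {G : SimpleGraph W} {G' : SimpleGraph V}
    (f : G →g G') (hf : Function.Injective f) {x y : W} (p : G.Walk x y) :
    walkInterior (p.map f) = f '' walkInterior p := by
  ext z
  simp only [walkInterior, Set.mem_setOf_eq, SimpleGraph.Walk.support_map, List.mem_map,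
    Set.mem_image]
  constructor
  · rintro ⟨⟨z₀, hz₀, rfl⟩, hzx, hzy⟩
    exact ⟨z₀, ⟨hz₀, fun h => hzx (by rw [h]), fun h => hzy (by rw [h])⟩, rfl⟩
  · rintro ⟨z₀, ⟨hz₀, hzx, hzy⟩, rfl⟩
    exact ⟨⟨z₀, hz₀, rfl⟩, fun h => hzx (hf h), fun h => hzy (hf h)⟩

lemma hasTopK_of_comap {W V : Type*} {G : SimpleGraph V} {f : W → V}
    (hf : Function.Injective f) {h : ℕ} (H : HasTopK (G.comap f) h) : HasTopK G h := by
  obtain ⟨φ, hφ, P, hP, hPrev, hPint, hPdisj⟩ := H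
  set fhom : G.comap f →g G := ⟨f, fun {a b} hab => hab⟩ with hfhom
  refine ⟨f ∘ φ, hf.comp hφ, fun x y hxy => (P x y hxy).map fhom, ?_, ?_, ?_, ?_⟩
  · intro x y hxy
    exact ⟨SimpleGraph.Walk.map_isPath_of_injective hf (hP x y hxy).1,
      by rw [SimpleGraph.Walk.length_map]; exact (hP x y hxy).2⟩
  · intro x y hxy
    show (P y x hxy.symm).map fhom = ((P x y hxy).map fhom).reverse
    rw [hPrev x y hxy, SimpleGraph.Walk.reverse_map]
  · intro x y hxy
    rw [walkInterior_map fhom hf, Set.range_comp]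
    exact (Set.disjoint_image_iff hf).2 (hPint x y hxy)
  · intro x y hxy x' y' hxy' hne
    rw [walkInterior_map fhom hf, walkInterior_map fhom hf]
    exact (Set.disjoint_image_iff hf).2 (hPdisj x y hxy x' y' hxy' hne)

end Transport
/-- Assume the Setup. If there exist `v,w ∈ X` such that `D(v) ∩ D(w) = ∅`
and some edge of `G` joins a vertex of `D(v)` to a vertex of `D(w)`, then `G` contains
`K_h` as a topological subgraph. -/
theorem stmt_5 {V C : Type*} [Fintype V]
    (a : ℝ) (ha : 2 ≤ a) (hdeg : DegSumConst a)
    (h : ℕ) (hh : 1 ≤ h)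
    (G : SimpleGraph V) (hconn : G.Connected)
    (t : ℕ) (ht : 144 * a ^ 2 * (h : ℝ) ^ 5 ≤ (t : ℝ))
    (χ : V → V → C) (h2G : IsTwoStable G χ)
    (h2H : IsTwoStableDigraph (clArc G χ t) χ)
    (c₀ : C) (hc₀ : ∃ v : V, χ v v = c₀ ∧ MaximalVtx G χ t v)
    (hvw : ∃ v ∈ {u : V | χ u u = c₀}, ∃ w ∈ {u : V | χ u u = c₀},
      clSet G χ t {v} ∩ clSet G χ t {w} = ∅ ∧
      ∃ x ∈ clSet G χ t {v}, ∃ y ∈ clSet G χ t {w}, G.Adj x y) :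
    HasTopK G h := by
  classical
  obtain ⟨v, hv, w, hw, hdisj, x, hxv, y, hyw, hxy⟩ := hvw
  have hne : Nonempty V := ⟨v⟩
  have hyv : y ∉ clSet G χ t {v} := by
    intro hyv
    have hmem : y ∈ clSet G χ t {v} ∩ clSet G χ t {w} := ⟨hyv, hyw⟩
    rw [hdisj] at hmem
    exact hmem
  have hxw : x ∉ clSet G χ t {w} := by
    intro hxw
    have hmem : x ∈ clSet G χ t {v} ∩ clSet G χ t {w} := ⟨hxv, hxw⟩
    rw [hdisj] at hmem
    exact hmem
  have hxdeg : t + 1 ≤ {z | G.Adj x z ∧ χ z z = χ y y}.ncard := bigAdj hxv hyv hxy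
  have hydeg : t + 1 ≤ {z | G.Adj y z ∧ χ z z = χ x x}.ncard := bigAdj hyw hxw hxy.symm
  set S : Set V := {u | χ u u = χ y y} ∪ {u | χ u u = χ x x} with hS
  have hmindeg : ∀ s ∈ S, t + 1 ≤ {z | G.Adj s z ∧ z ∈ S}.ncard := by
    intro s hs
    rcases hs with hs | hs
    · -- χ s s = χ y y : s behaves like y
      have hcnt := fiber_nbr_count h2G (hs : χ s s = χ y y) (χ x x)
      have hsub : {z | G.Adj s z ∧ χ z z = χ x x} ⊆ {z | G.Adj s z ∧ z ∈ S} :=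
        fun z hz => ⟨hz.1, Or.inr hz.2⟩
      calc t + 1 ≤ {z | G.Adj y z ∧ χ z z = χ x x}.ncard := hydeg
        _ = {z | G.Adj s z ∧ χ z z = χ x x}.ncard := hcnt.symm
        _ ≤ _ := Set.ncard_le_ncard hsub (Set.toFinite _)
    · have hcnt := fiber_nbr_count h2G (hs : χ s s = χ x x) (χ y y)
      have hsub : {z | G.Adj s z ∧ χ z z = χ y y} ⊆ {z | G.Adj s z ∧ z ∈ S} :=
        fun z hz => ⟨hz.1, Or.inl hz.2⟩
      calc t + 1 ≤ {z | G.Adj x z ∧ χ z z = χ y y}.ncard := hxdeg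
        _ = {z | G.Adj s z ∧ χ z z = χ y y}.ncard := hcnt.symm
        _ ≤ _ := Set.ncard_le_ncard hsub (Set.toFinite _)
  by_contra hK
  set SF : Finset V := S.toFinset with hSF
  set m : ℕ := SF.card with hm
  set e := SF.equivFin with he
  set f : Fin m → V := fun i => ((e.symm i : SF) : V) with hf
  have hfinj : Function.Injective f := by
    intro i j hij
    apply e.symm.injective
    exact Subtype.val_injective hij
  have hrange : Set.range f = S := by
    ext z
    constructor
    · rintro ⟨i, rfl⟩
      exact Set.mem_toFinset.mp (e.symm i).2
    · intro hz
      have hzSF : z ∈ SF := Set.mem_toFinset.mpr hz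
      refine ⟨e ⟨z, hzSF⟩, ?_⟩
      simp [hf]
  have hK' : ¬ HasTopK (G.comap f) h := fun hk => hK (hasTopK_of_comap hfinj hk)
  have hbound := hdeg m h (G.comap f) hh hK'
  have hterm : ∀ i : Fin m, t + 1 ≤ {u : Fin m | (G.comap f).Adj i u}.ncard := by
    intro i
    have hfiS : f i ∈ S := by rw [← hrange]; exact ⟨i, rfl⟩
    have himg : f '' {u : Fin m | (G.comap f).Adj i u} = {z | G.Adj (f i) z ∧ z ∈ S} := by
      ext z
      constructor
      · rintro ⟨u, hu, rfl⟩
        exact ⟨hu, by rw [← hrange]; exact ⟨u, rfl⟩⟩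
      · rintro ⟨hadj, hzS⟩
        rw [← hrange] at hzS
        obtain ⟨u, rfl⟩ := hzS
        exact ⟨u, hadj, rfl⟩
    have := hmindeg (f i) hfiS
    rw [← himg, Set.ncard_image_of_injective _ hfinj] at this
    exact this
  have hsum : (m : ℝ) * ((t : ℝ) + 1) ≤ ∑ i : Fin m, (({u | (G.comap f).Adj i u}.ncard : ℝ)) := by
    have : ∀ i ∈ Finset.univ (α := Fin m), ((t : ℝ) + 1) ≤
        (({u | (G.comap f).Adj i u}.ncard : ℝ)) := by
      intro i _
      have := hterm i
      push_cast
      exact_mod_cast this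
    calc (m : ℝ) * ((t : ℝ) + 1) = ∑ _i : Fin m, ((t : ℝ) + 1) := by
          rw [Finset.sum_const, Finset.card_univ, Fintype.card_fin, nsmul_eq_mul]
      _ ≤ _ := Finset.sum_le_sum this
  have hm1 : 1 ≤ m :=
    Finset.card_pos.mpr ⟨x, Set.mem_toFinset.mpr (Or.inr rfl)⟩
  have hm1' : (1 : ℝ) ≤ (m : ℝ) := by exact_mod_cast hm1
  have hh1 : (1 : ℝ) ≤ (h : ℝ) := by exact_mod_cast hh
  have htot : (m : ℝ) * ((t : ℝ) + 1) ≤ a * (h : ℝ) ^ 2 * (m : ℝ) := le_trans hsum hbound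
  have hmpos : (0:ℝ) < (m : ℝ) := lt_of_lt_of_le zero_lt_one hm1'
  have hdiv : (t:ℝ) + 1 ≤ a * (h:ℝ)^2 := by
    by_contra hcon
    push_neg at hcon
    have hlt := mul_lt_mul_of_pos_left hcon hmpos
    nlinarith [htot]
  have hhpos : (0:ℝ) < (h:ℝ) := lt_of_lt_of_le zero_lt_one hh1
  have h1 : (h:ℝ)^2 ≤ (h:ℝ)^5 := pow_le_pow_right₀ hh1 (by norm_num)
  have h2 : a ≤ a^2 := by nlinarith
  have h3 : a * (h:ℝ)^2 ≤ a^2 * (h:ℝ)^5 :=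
    mul_le_mul h2 h1 (by positivity) (by positivity)
  have h4 : a^2 * (h:ℝ)^5 ≤ 144 * (a^2 * (h:ℝ)^5) := by nlinarith [sq_nonneg a, pow_pos hhpos 5]
  linarith [hdiv, ht, h3, h4]
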